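/- For any x ∈ ℂⁿ with b − Ax ≠ 0, define ε(x) = max_{i∈{1,…,m}} ψ_i(x)/(2‖b − Ax‖₂²) + 1/(2‖A‖_F²). Then ε(x)·‖A‖_F² ≥ (1/2)·‖A‖_F²/‖A_{Û(x),:}‖_F² + 1/2. -/

import Mathlib

open Matrix Finset

noncomputable section

/-- Squared Euclidean norm `‖v‖₂²` of a complex vector. -/
def vecNormSq {k : ℕ} (v : Fin k → ℂ) : ℝ := ∑ i, ‖v i‖ ^ 2

variable {m n : ℕ}

/-- Squared Euclidean norm `‖A_{i,:}‖₂²` of the `i`-th row of `A`. -/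
def rowNormSq (A : Matrix (Fin m) (Fin n) ℂ) (i : Fin m) : ℝ := ∑ j, ‖A i j‖ ^ 2

/-- Squared Frobenius norm `‖A‖_F²`. -/
def frobSq (A : Matrix (Fin m) (Fin n) ℂ) : ℝ := ∑ i, ∑ j, ‖A i j‖ ^ 2

/-- `ψ_i(x) = |b_i − A_{i,:} x|² / ‖A_{i,:}‖₂²`. -/
def psi (A : Matrix (Fin m) (Fin n) ℂ) (b : Fin m → ℂ) (x : Fin n → ℂ) (i : Fin m) : ℝ :=
  ‖b i - A.mulVec x i‖ ^ 2 / rowNormSq A i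

/-- `max_{i ∈ [m]} ψ_i(x)`. -/
def psiMax (A : Matrix (Fin m) (Fin n) ℂ) (b : Fin m → ℂ) (x : Fin n → ℂ) : ℝ :=
  ⨆ i, psi A b x i

/-- The row submatrix `A_{S,:}` of `A`, realized by replacing the rows outside `S` with zero
(which changes neither the Frobenius norm nor the largest singular value). -/
def rowSub (A : Matrix (Fin m) (Fin n) ℂ) (S : Finset (Fin m)) : Matrix (Fin m) (Fin n) ℂ :=
  fun i j => if i ∈ S then A i j else 0

/-- `σ_r(A)²` : the smallest nonzero eigenvalue of `AᴴA`. -/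
def sigmaRSq (A : Matrix (Fin m) (Fin n) ℂ) : ℝ :=
  sInf {μ : ℝ | μ ≠ 0 ∧ ∃ i, (Matrix.isHermitian_conjTranspose_mul_self A).eigenvalues i = μ}

/-- `σ₁(M)²` : the largest eigenvalue of `MᴴM`, i.e. the largest singular value squared. -/
def sigma1Sq {k : Type*} [Fintype k] (M : Matrix k (Fin n) ℂ) : ℝ :=
  ⨆ i, (Matrix.isHermitian_conjTranspose_mul_self M).eigenvalues i

/-- `Û(x) = {i ∈ [m] : ψ_i(x) ≠ 0}`. -/
def Uhat (A : Matrix (Fin m) (Fin n) ℂ) (b : Fin m → ℂ) (x : Fin n → ℂ) : Finset (Fin m) :=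
  Finset.univ.filter fun i => psi A b x i ≠ 0

/-- The greedy index set `U(x)` with relaxation parameter `θ = 1/2`. -/
def Ugreedy (A : Matrix (Fin m) (Fin n) ℂ) (b : Fin m → ℂ) (x : Fin n → ℂ) : Finset (Fin m) :=
  Finset.univ.filter fun i =>
    (1 / 2) * psiMax A b x + (1 / 2) * (vecNormSq (b - A.mulVec x) / frobSq A) ≤ psi A b x i

/-- `η(x) = Σ_{i ∈ U(x)} (b_i − A_{i,:}x) e_i`. -/
def eta (A : Matrix (Fin m) (Fin n) ℂ) (b : Fin m → ℂ) (x : Fin n → ℂ) : Fin m → ℂ :=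
  fun i => if i ∈ Ugreedy A b x then b i - A.mulVec x i else 0

/-- `uᴴ v`, the conjugate dot product. -/
def dotc {k : ℕ} (u v : Fin k → ℂ) : ℂ := ∑ i, (starRingEnd ℂ) (u i) * v i

/-- `φ(x, η) = |ηᴴ(b − A x)|² / ‖Aᴴ η‖₂²`. -/
def phi (A : Matrix (Fin m) (Fin n) ℂ) (b : Fin m → ℂ) (x : Fin n → ℂ) (η : Fin m → ℂ) : ℝ :=
  ‖dotc η (b - A.mulVec x)‖ ^ 2 / vecNormSq (Aᴴ.mulVec η)

end

/-- for any `x` with `b − Ax ≠ 0` and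
`ε(x) = max_i ψ_i(x)/(2‖b − Ax‖₂²) + 1/(2‖A‖_F²)`, one has
`ε(x)·‖A‖_F² ≥ (1/2)·‖A‖_F²/‖A_{Û(x),:}‖_F² + 1/2`. -/
theorem stmt12 {m n : ℕ} (A : Matrix (Fin m) (Fin n) ℂ) (b : Fin m → ℂ)
    (hA : ∀ i, A i ≠ 0) (x : Fin n → ℂ) (hres : b - A.mulVec x ≠ 0)
    (ε : ℝ)
    (hε : ε = psiMax A b x / (2 * vecNormSq (b - A.mulVec x)) + 1 / (2 * frobSq A)) :
    (1 / 2) * (frobSq A / frobSq (rowSub A (Uhat A b x))) + 1 / 2 ≤ ε * frobSq A := by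
  obtain ⟨i0, hi0⟩ := Function.ne_iff.mp hres
  have hrow : ∀ i, 0 < rowNormSq A i := by
    intro i
    obtain ⟨j, hj⟩ := Function.ne_iff.mp (hA i)
    exact Finset.sum_pos' (fun j _ => by positivity)
      ⟨j, Finset.mem_univ j, pow_pos (norm_pos_iff.mpr hj) 2⟩
  have hF : 0 < frobSq A :=
    Finset.sum_pos (fun i _ => hrow i) ⟨i0, Finset.mem_univ i0⟩
  have hr : 0 < vecNormSq (b - A.mulVec x) :=
    Finset.sum_pos' (fun i _ => by positivity)
      ⟨i0, Finset.mem_univ i0, pow_pos (norm_pos_iff.mpr hi0) 2⟩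
  set U := Uhat A b x with hU
  have hi0U : i0 ∈ U := by
    simp only [hU, Uhat, Finset.mem_filter, Finset.mem_univ, true_and]
    have : (0:ℝ) < psi A b x i0 := by
      unfold psi
      have hnum : (0:ℝ) < ‖b i0 - A.mulVec x i0‖ ^ 2 := by
        have h' : b i0 - A.mulVec x i0 ≠ 0 := hi0
        exact pow_pos (norm_pos_iff.mpr h') 2
      exact div_pos hnum (hrow i0)
    exact this.ne'
  have hpsiMax : ∀ i, psi A b x i ≤ psiMax A b x := fun i =>
    le_ciSup (Set.Finite.bddAbove (Set.finite_range _)) i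
  have hFU_eq : frobSq (rowSub A U) = ∑ i ∈ U, rowNormSq A i := by
    unfold frobSq rowSub rowNormSq
    calc ∑ i, ∑ j, ‖(if i ∈ U then A i j else 0 : ℂ)‖ ^ 2
        = ∑ i, (if i ∈ U then ∑ j, ‖A i j‖ ^ 2 else 0) := by
          refine Finset.sum_congr rfl fun i _ => ?_
          split <;> simp
      _ = ∑ i ∈ U, ∑ j, ‖A i j‖ ^ 2 := by
          rw [Finset.sum_ite_mem, Finset.univ_inter]
  have hFU : 0 < frobSq (rowSub A U) := by
    rw [hFU_eq]
    exact Finset.sum_pos (fun i _ => hrow i) ⟨i0, hi0U⟩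
  have hkey : vecNormSq (b - A.mulVec x) ≤ psiMax A b x * frobSq (rowSub A U) := by
    rw [hFU_eq, Finset.mul_sum]
    have h0 : ∀ i ∈ Finset.univ, i ∉ U → ‖(b - A.mulVec x) i‖ ^ 2 = 0 := by
      intro i _ hi
      have hpsi0 : psi A b x i = 0 := by
        simpa [hU, Uhat] using hi
      have := div_eq_zero_iff.mp hpsi0
      rcases this with h | h
      · simpa using h
      · exact absurd h (hrow i).ne'
    have hsum : vecNormSq (b - A.mulVec x) = ∑ i ∈ U, ‖(b - A.mulVec x) i‖ ^ 2 :=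
      (Finset.sum_subset (Finset.subset_univ U) h0).symm
    rw [hsum]
    refine Finset.sum_le_sum fun i hi => ?_
    have heq : ‖(b - A.mulVec x) i‖ ^ 2 = psi A b x i * rowNormSq A i := by
      unfold psi
      rw [div_mul_cancel₀ _ (hrow i).ne']
      simp [Pi.sub_apply]
    rw [heq]
    exact mul_le_mul_of_nonneg_right (hpsiMax i) (hrow i).le
  rw [hε]
  have hRHS : (psiMax A b x / (2 * vecNormSq (b - A.mulVec x)) + 1 / (2 * frobSq A)) *
      frobSq A = psiMax A b x * frobSq A / (2 * vecNormSq (b - A.mulVec x)) + 1 / 2 := by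
    field_simp
  rw [hRHS]
  have hmain : (1 / 2) * (frobSq A / frobSq (rowSub A U)) ≤
      psiMax A b x * frobSq A / (2 * vecNormSq (b - A.mulVec x)) := by
    rw [one_div, inv_mul_eq_div, div_div]
    rw [div_le_div_iff₀ (by positivity) (by positivity)]
    nlinarith [mul_le_mul_of_nonneg_left hkey hF.le, hF.le, hr.le, hFU.le]
  linarith
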